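/- Let n ≥ 2, γ ∈ (0,1), ε ∈ (0,1/4), r₀ ∈ (0,1/2), C₀ > 0, and b(r) = (n−2)/r + 2(r−r₀)₊/(ε + (r−r₀)₊²). Let V ∈ C²([r₀/2, 1)) satisfy |V'(r₀/2)| ≤ C₀ and V''(r) + b(r) V'(r) = A'(r) + B(r) on (r₀/2, 1), where A ∈ C¹((r₀/2,1)) and B ∈ C((r₀/2,1)) satisfy |A(r)| ≤ C₀ (r−r₀)₊^{γ}/(ε + (r−r₀)₊²)^{1/2} and |B(r)| ≤ C₀ (r−r₀)₊^{γ}/(ε + (r−r₀)₊²). Then |V'(r)| ≤ C (ε + (r−r₀)₊²)^{(γ−1)/2} for all r ∈ [r₀/2, 1), where C > 0 depends only on n, r₀, γ, and C₀ (in particular C is independent of ε). -/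

import Mathlib

open Set

lemma maxsq_hasDerivAt (r₀ r : ℝ) :
    HasDerivAt (fun s => max (s - r₀) 0 ^ 2) (2 * max (r - r₀) 0) r := by
  rcases lt_trichotomy r r₀ with h | h | h
  · have hmax : max (r - r₀) 0 = 0 := max_eq_right (by linarith)
    rw [hmax, mul_zero]
    have : (fun s : ℝ => max (s - r₀) 0 ^ 2) =ᶠ[nhds r] fun _ => (0:ℝ) := by
      filter_upwards [Iio_mem_nhds h] with y hy
      rw [max_eq_right (by simp at hy; linarith)]; ring
    exact (hasDerivAt_const r (0:ℝ)).congr_of_eventuallyEq this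
  · subst h
    have hmax : max (r - r) (0:ℝ) = 0 := by simp
    rw [hmax, mul_zero]
    rw [hasDerivAt_iff_isLittleO]
    rw [Asymptotics.isLittleO_iff]
    intro c hc
    filter_upwards [Metric.ball_mem_nhds r hc] with y hy
    simp only [Real.norm_eq_abs]
    have h1 : |y - r| < c := by
      have := mem_ball_iff_norm.mp hy; simpa [Real.norm_eq_abs] using this
    have h2 : max (y - r) 0 ^ 2 ≤ (y - r)^2 := by
      rcases le_total (y - r) 0 with h' | h'
      · rw [max_eq_right h']; simpa using sq_nonneg (y - r)
      · rw [max_eq_left h']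
    have h3 : |max (y - r) 0 ^ 2 - max (r - r) 0 ^ 2 - (y - r) • (0:ℝ)| = max (y - r) 0 ^ 2 := by
      rw [hmax]
      have : (0:ℝ)^2 = 0 := by ring
      rw [this, smul_zero, sub_zero, sub_zero, abs_of_nonneg (by positivity)]
    rw [h3]
    calc max (y - r) 0 ^ 2 ≤ (y - r)^2 := h2
      _ = |y - r| ^ 2 := (sq_abs _).symm
      _ = |y - r| * |y - r| := pow_two _
      _ ≤ c * |y - r| := mul_le_mul_of_nonneg_right h1.le (abs_nonneg _)
  · have hmax : max (r - r₀) 0 = r - r₀ := max_eq_left (by linarith)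
    rw [hmax]
    have : (fun s : ℝ => max (s - r₀) 0 ^ 2) =ᶠ[nhds r] fun s => (s - r₀) ^ 2 := by
      filter_upwards [Ioi_mem_nhds h] with y hy
      rw [max_eq_left (by simp at hy; linarith)]
    have hd : HasDerivAt (fun s : ℝ => (s - r₀) ^ 2) (2 * (r - r₀)) r := by
      have := ((hasDerivAt_id r).sub_const r₀).fun_pow 2
      simpa using this
    exact hd.congr_of_eventuallyEq this

lemma mu_identity (m : ℕ) (x qx M : ℝ) (hx : x ≠ 0) (hq : qx ≠ 0) :
    (m:ℝ) * x^(m-1) * qx + x^m * (2*M) = ((m:ℝ)/x + 2*M/qx) * (x^m * qx) := by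
  rcases m with _ | k
  · simp; field_simp
  · have h : x^(k+1) = x^k * x := pow_succ x k
    simp only [Nat.add_sub_cancel, Nat.cast_add, Nat.cast_one]
    field_simp
    ring

lemma rpow_le_two {w p : ℝ} (hw : 0 < w) (hw2 : w ≤ 2) (hp0 : 0 ≤ p) (hp1 : p ≤ 1) :
    w ^ p ≤ 2 := by
  rcases le_or_gt w 1 with h | h
  · exact (Real.rpow_le_one hw.le h hp0).trans one_le_two
  · calc w ^ p ≤ w ^ (1:ℝ) := Real.rpow_le_rpow_of_exponent_le h.le hp1
      _ = w := Real.rpow_one w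
      _ ≤ 2 := hw2


/-- The coefficient `b(r) = (n−2)/r + 2(r−r₀)₊/(ε + (r−r₀)₊²)`. -/
noncomputable def bCoeff (n : ℕ) (r₀ ε r : ℝ) : ℝ :=
  ((n : ℝ) - 2)/r + 2 * max (r - r₀) 0 / (ε + max (r - r₀) 0 ^ 2)

set_option maxHeartbeats 4000000 in
/-- Let `n ≥ 2`, `γ ∈ (0,1)`, `ε ∈ (0,1/4)`, `r₀ ∈ (0,1/2)`, `C₀ > 0`.
If `V ∈ C²([r₀/2,1))` satisfies `|V'(r₀/2)| ≤ C₀` and `V'' + b V' = A' + B` on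
`(r₀/2, 1)` with `|A(r)| ≤ C₀ (r−r₀)₊^γ (ε+(r−r₀)₊²)^{−1/2}` and
`|B(r)| ≤ C₀ (r−r₀)₊^γ (ε+(r−r₀)₊²)^{−1}`, then
`|V'(r)| ≤ C (ε + (r−r₀)₊²)^{(γ−1)/2}` on `[r₀/2, 1)`, where `C > 0` depends only on
`n`, `r₀`, `γ`, `C₀` (in particular `C` is independent of `ε`). Derivatives of `V` are
taken within `[r₀/2, 1)`. -/
theorem stmt17 (n : ℕ) (hn : 2 ≤ n) (r₀ γ C₀ : ℝ)
    (hr₀ : r₀ ∈ Ioo (0:ℝ) (1/2)) (hγ : γ ∈ Ioo (0:ℝ) 1) (hC₀ : 0 < C₀) :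
    ∃ C : ℝ, 0 < C ∧
      ∀ ε : ℝ, ε ∈ Ioo (0:ℝ) (1/4) →
      ∀ V A B : ℝ → ℝ,
        (∀ r ∈ Ico (r₀/2) 1, DifferentiableWithinAt ℝ V (Ico (r₀/2) 1) r) →
        (∀ r ∈ Ico (r₀/2) 1,
          DifferentiableWithinAt ℝ (derivWithin V (Ico (r₀/2) 1)) (Ico (r₀/2) 1) r) →
        ContinuousOn (derivWithin (derivWithin V (Ico (r₀/2) 1)) (Ico (r₀/2) 1))
          (Ico (r₀/2) 1) →
        |derivWithin V (Ico (r₀/2) 1) (r₀/2)| ≤ C₀ →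
        (∀ r ∈ Ioo (r₀/2) 1, DifferentiableAt ℝ A r) →
        ContinuousOn (deriv A) (Ioo (r₀/2) 1) →
        ContinuousOn B (Ioo (r₀/2) 1) →
        (∀ r ∈ Ioo (r₀/2) 1,
          |A r| ≤ C₀ * max (r - r₀) 0 ^ γ / (ε + max (r - r₀) 0 ^ 2) ^ ((1:ℝ)/2)) →
        (∀ r ∈ Ioo (r₀/2) 1,
          |B r| ≤ C₀ * max (r - r₀) 0 ^ γ / (ε + max (r - r₀) 0 ^ 2)) →
        (∀ r ∈ Ioo (r₀/2) 1,
          derivWithin (derivWithin V (Ico (r₀/2) 1)) (Ico (r₀/2) 1) r +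
            bCoeff n r₀ ε r * derivWithin V (Ico (r₀/2) 1) r = deriv A r + B r) →
        ∀ r ∈ Ico (r₀/2) 1,
          |derivWithin V (Ico (r₀/2) 1) r| ≤
            C * (ε + max (r - r₀) 0 ^ 2) ^ ((γ - 1)/2) := by
  obtain ⟨hr₀0, hr₀1⟩ := hr₀
  obtain ⟨hγ0, hγ1⟩ := hγ
  set m := n - 2 with hm
  have hmn : ((m:ℝ)) = (n:ℝ) - 2 := by
    rw [hm]; push_cast [Nat.cast_sub hn]; ring
  have hmln : (m:ℝ) ≤ (n:ℝ) := by rw [hmn]; linarith [Nat.cast_nonneg (α := ℝ) n]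
  have hP : (0:ℝ) < (r₀/2)^m := pow_pos (by linarith) m
  have hP1 : (r₀/2)^m ≤ 1 := pow_le_one₀ (by linarith) (by linarith)
  refine ⟨C₀ + (2*(n:ℝ)+5)*C₀/((r₀/2)^m), by positivity, ?_⟩
  rintro ε ⟨hε0, hε1⟩ V A B hV1 hV2 _ hV'0 hAd hA'c hBc hAb hBb hODE
  set I := Ico (r₀/2) (1:ℝ) with hI
  set W := derivWithin V I with hWdef
  set q : ℝ → ℝ := fun s => ε + max (s - r₀) 0 ^ 2 with hq
  set μ : ℝ → ℝ := fun s => s ^ m * q s with hμ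
  set μ' : ℝ → ℝ := fun s => (m:ℝ) * s^(m-1) * q s + s^m * (2 * max (s - r₀) 0) with hμ'
  have hr₀m : r₀ < 1 := by linarith
  have hq_pos : ∀ s, 0 < q s := fun s => add_pos_of_pos_of_nonneg hε0 (by positivity)
  have hIoo : Ioo (r₀/2) (1:ℝ) ⊆ I := Ioo_subset_Ico_self
  have hnhds : ∀ x ∈ Ioo (r₀/2) (1:ℝ), I ∈ nhds x := fun x hx =>
    Filter.mem_of_superset (isOpen_Ioo.mem_nhds hx) hIoo
  have hWc : ContinuousOn W I := fun x hx => (hV2 x hx).continuousWithinAt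
  have hWd : ∀ x ∈ Ioo (r₀/2) (1:ℝ), HasDerivAt W (derivWithin W I x) x := by
    intro x hx
    rw [derivWithin_of_mem_nhds (hnhds x hx)]
    exact ((hV2 x (hIoo hx)).differentiableAt (hnhds x hx)).hasDerivAt
  have hqd : ∀ s, HasDerivAt q (2 * max (s - r₀) 0) s := fun s =>
    (maxsq_hasDerivAt r₀ s).const_add ε
  have hμd : ∀ s, HasDerivAt μ (μ' s) s := by
    intro s
    exact (hasDerivAt_pow m s).mul (hqd s)
  have hμ'q : ∀ x ∈ Ioo (r₀/2) (1:ℝ), μ' x = bCoeff n r₀ ε x * μ x := by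
    intro x hx
    have hx0 : x ≠ 0 := ne_of_gt (by linarith [hx.1])
    have hq0 : q x ≠ 0 := (hq_pos x).ne'
    have hb : bCoeff n r₀ ε x = (m:ℝ)/x + 2 * max (x - r₀) 0 / q x := by
      rw [bCoeff, hmn]
      try rfl
    rw [hb]
    simp only [hμ', hμ]
    have := mu_identity m x (q x) (max (x - r₀) 0) hx0 hq0
    rw [this]
    try ring
  have hA0 : ∀ y ∈ Ioo (r₀/2) (1:ℝ), y ≤ r₀ → A y = 0 := by
    intro y hy hyr
    have h := hAb y hy
    rw [max_eq_right (by linarith), Real.zero_rpow hγ0.ne', mul_zero, zero_div] at h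
    exact abs_eq_zero.mp (le_antisymm h (abs_nonneg _))
  have hB0 : ∀ y ∈ Ioo (r₀/2) (1:ℝ), y ≤ r₀ → B y = 0 := by
    intro y hy hyr
    have h := hBb y hy
    rw [max_eq_right (by linarith), Real.zero_rpow hγ0.ne', mul_zero, zero_div] at h
    exact abs_eq_zero.mp (le_antisymm h (abs_nonneg _))
  have hdW : ∀ x ∈ Ioo (r₀/2) (1:ℝ),
      derivWithin W I x = deriv A x + B x - bCoeff n r₀ ε x * W x := by
    intro x hx
    have h := hODE x hx
    linarith
  have hμcont : Continuous μ := by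
    simp only [hμ, hq]
    exact (continuous_pow m).mul (continuous_const.add
      (((continuous_id.sub continuous_const).max continuous_const).pow 2))
  have hμ'cont : Continuous μ' := by
    simp only [hμ', hq]
    have h1 : Continuous fun s : ℝ => max (s - r₀) 0 :=
      (continuous_id.sub continuous_const).max continuous_const
    exact ((continuous_const.mul (continuous_pow (m-1))).mul
      (continuous_const.add (h1.pow 2))).add ((continuous_pow m).mul (continuous_const.mul h1))
  have hμpos : ∀ s, 0 < s → 0 < μ s := fun s hs => mul_pos (pow_pos hs m) (hq_pos s)
  -- constancy of μ * W on [r₀/2, r₀]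
  have hconst : ∀ c ∈ Icc (r₀/2) r₀, μ c * W c = μ (r₀/2) * W (r₀/2) := by
    intro c hc
    have key : (∫ _ in (r₀/2)..c, (0:ℝ)) = μ c * W c - μ (r₀/2) * W (r₀/2) := by
      apply intervalIntegral.integral_eq_sub_of_hasDeriv_right_of_le hc.1
      · exact hμcont.continuousOn.mul (hWc.mono (fun s hs =>
          ⟨hs.1, lt_of_le_of_lt (hs.2.trans hc.2) hr₀m⟩))
      · intro x hx
        have hx' : x ∈ Ioo (r₀/2) (1:ℝ) :=
          ⟨hx.1, lt_of_lt_of_le hx.2 (hc.2.trans hr₀m.le)⟩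
        have hxr₀ : x < r₀ := lt_of_lt_of_le hx.2 hc.2
        have hd := (hμd x).mul (hWd x hx')
        have hA' : deriv A x = 0 := by
          have hev : A =ᶠ[nhds x] fun _ => (0:ℝ) := by
            filter_upwards [isOpen_Ioo.mem_nhds (show x ∈ Ioo (r₀/2) r₀ from ⟨hx.1, hxr₀⟩)]
              with y hy
            exact hA0 y ⟨hy.1, lt_trans hy.2 hr₀m⟩ hy.2.le
          rw [hev.deriv_eq]; exact deriv_const x 0
        have hBx : B x = 0 := hB0 x hx' hxr₀.le
        have hzero : μ' x * W x + μ x * derivWithin W I x = 0 := by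
          rw [hdW x hx', hA', hBx, hμ'q x hx']; ring
        rw [hzero] at hd
        exact hd.hasDerivWithinAt
      · exact intervalIntegrable_const
    have h0 : (∫ _ in (r₀/2)..c, (0:ℝ)) = 0 := intervalIntegral.integral_zero
    rw [h0] at key
    linarith
  intro r hr
  have hrC : (ε + max (r - r₀) 0 ^ 2) = q r := rfl
  rw [hrC]
  rcases le_or_gt r r₀ with hcase | hcase
  · -- easy region: r ≤ r₀
    have hqr : q r = ε := by
      simp only [hq]; rw [max_eq_right (by linarith)]; ring
    have hq2 : q (r₀/2) = ε := by
      simp only [hq]; rw [max_eq_right (by linarith)]; ring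
    have hrpos : (0:ℝ) < r := lt_of_lt_of_le (by linarith) hr.1
    have h1 := hconst r ⟨hr.1, hcase⟩
    have hμr : 0 < μ r := hμpos r hrpos
    have hμ2 : 0 < μ (r₀/2) := hμpos _ (by linarith)
    have hWr : |W r| ≤ C₀ := by
      have e : μ r * |W r| = μ (r₀/2) * |W (r₀/2)| := by
        rw [← abs_of_pos hμr, ← abs_mul, h1, abs_mul, abs_of_pos hμ2]
      have hle : μ (r₀/2) ≤ μ r := by
        simp only [hμ, hqr, hq2]
        exact mul_le_mul_of_nonneg_right (pow_le_pow_left₀ (by linarith) hr.1 m) hε0.le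
      have : μ r * |W r| ≤ μ r * C₀ := by
        rw [e]
        calc μ (r₀/2) * |W (r₀/2)| ≤ μ (r₀/2) * C₀ :=
              mul_le_mul_of_nonneg_left hV'0 hμ2.le
          _ ≤ μ r * C₀ := mul_le_mul_of_nonneg_right hle hC₀.le
      exact le_of_mul_le_mul_left this hμr
    have hrp1 : (1:ℝ) ≤ q r ^ ((γ-1)/2) := by
      rw [hqr]
      exact Real.one_le_rpow_of_pos_of_le_one_of_nonpos hε0 (by linarith) (by linarith)
    calc |W r| ≤ C₀ := hWr
      _ = C₀ * 1 := (mul_one C₀).symm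
      _ ≤ (C₀ + (2*(n:ℝ)+5)*C₀/((r₀/2)^m)) * q r ^ ((γ-1)/2) := by
          have hnn : 0 ≤ (2*(n:ℝ)+5)*C₀/((r₀/2)^m) := by positivity
          apply mul_le_mul (by linarith) hrp1 zero_le_one (by linarith)
  · -- main region: r₀ < r < 1
    set g : ℝ → ℝ := fun s => μ s * B s - μ' s * A s with hg
    set a := 3*r₀/4 with ha
    have haIoo : a ∈ Ioo (r₀/2) (1:ℝ) := ⟨by rw [ha]; linarith, by rw [ha]; linarith⟩
    have har : a ≤ r := by rw [ha]; linarith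
    have har₀ : a ≤ r₀ := by rw [ha]; linarith
    have hsub : Icc a r ⊆ Ioo (r₀/2) (1:ℝ) := fun s hs =>
      ⟨lt_of_lt_of_le (by rw [ha]; linarith) hs.1, lt_of_le_of_lt hs.2 hr.2⟩
    have hAc : ContinuousOn A (Ioo (r₀/2) (1:ℝ)) := fun x hx =>
      (hAd x hx).continuousAt.continuousWithinAt
    have hgc : ContinuousOn g (Icc a r) := by
      apply ContinuousOn.sub
      · exact (hμcont.continuousOn).mul (hBc.mono hsub)
      · exact (hμ'cont.continuousOn).mul (hAc.mono hsub)
    have hint : IntervalIntegrable g MeasureTheory.volume a r :=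
      ContinuousOn.intervalIntegrable_of_Icc har hgc
    have hFTC : ∫ s in a..r, g s = μ r * (W r - A r) - μ a * (W a - A a) := by
      apply intervalIntegral.integral_eq_sub_of_hasDerivAt
      · intro x hx
        rw [uIcc_of_le har] at hx
        have hx' := hsub hx
        have hd := (hμd x).mul ((hWd x hx').sub ((hAd x hx').hasDerivAt))
        have e : μ' x * (W x - A x) + μ x * (derivWithin W I x - deriv A x) = g x := by
          simp only [hg]
          rw [hdW x hx', hμ'q x hx']; ring
        exact e ▸ hd
      · exact hint
    have hg0 : ∀ s ∈ Icc a r₀, g s = 0 := by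
      intro s hs
      have hs' : s ∈ Ioo (r₀/2) (1:ℝ) :=
        ⟨lt_of_lt_of_le (by rw [ha]; linarith) hs.1, lt_of_le_of_lt hs.2 hr₀m⟩
      simp only [hg]
      rw [hA0 s hs' hs.2, hB0 s hs' hs.2]; ring
    have hint1 : IntervalIntegrable g MeasureTheory.volume a r₀ := hint.mono_set (by
      rw [uIcc_of_le har₀, uIcc_of_le har]
      exact Icc_subset_Icc le_rfl hcase.le)
    have hint2 : IntervalIntegrable g MeasureTheory.volume r₀ r := hint.mono_set (by
      rw [uIcc_of_le hcase.le, uIcc_of_le har]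
      exact Icc_subset_Icc har₀ le_rfl)
    have hsplit : ∫ s in a..r, g s = ∫ s in r₀..r, g s := by
      rw [← intervalIntegral.integral_add_adjacent_intervals hint1 hint2]
      have h0 : (∫ s in a..r₀, g s) = 0 := by
        rw [intervalIntegral.integral_congr (g := fun _ => (0:ℝ)) (by
          intro s hs
          rw [uIcc_of_le har₀] at hs
          exact hg0 s hs)]
        simp
      rw [h0, zero_add]
    have hgb : ∀ s ∈ Icc r₀ r, |g s| ≤ (2*(n:ℝ)+3)*C₀ * max (s - r₀) 0 ^ γ := by
      intro s hs
      have hs' : s ∈ Ioo (r₀/2) (1:ℝ) := ⟨by linarith [hs.1], lt_of_le_of_lt hs.2 hr.2⟩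
      have hspos : 0 < s := by linarith [hs.1]
      have hs1 : s ≤ 1 := hs.2.trans hr.2.le
      set t := max (s - r₀) 0 with ht
      have ht0 : 0 ≤ t := le_max_right _ _
      have htmax : t = s - r₀ := max_eq_left (by linarith [hs.1])
      have hu0 : 0 < q s := hq_pos s
      have hqs : q s = ε + t^2 := rfl
      have hsle1 : s - r₀ ≤ 1 := by linarith [hs.2, hr.2]
      have hs0' : 0 ≤ s - r₀ := by linarith [hs.1]
      have hu2 : q s ≤ 2 := by
        rw [hqs, htmax]
        nlinarith [hs0', hsle1, hε1]
      set σ := Real.sqrt (q s) with hσ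
      have hσ0 : 0 < σ := Real.sqrt_pos.mpr hu0
      have hσsq : σ^2 = q s := Real.sq_sqrt hu0.le
      have hσ2 : σ ≤ 2 := by nlinarith [hσsq, hσ0.le, hu2, sq_nonneg (σ - 2)]
      have htσ : t ≤ σ := by
        rw [hσ]
        rw [Real.le_sqrt ht0 hu0.le, hqs]
        linarith [hε0.le]
      have hrpowhalf : q s ^ ((1:ℝ)/2) = σ := by rw [hσ, Real.sqrt_eq_rpow]
      have htγ : 0 ≤ t ^ γ := Real.rpow_nonneg ht0 γ
      have hsm : s^m ≤ 1 := pow_le_one₀ hspos.le hs1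
      have hsm' : s^(m-1) ≤ 1 := pow_le_one₀ hspos.le hs1
      have hAs : |A s| ≤ C₀ * t ^ γ / σ := by
        have h := hAb s hs'
        rw [← ht, ← hqs, hrpowhalf] at h
        exact h
      have hBs : |B s| ≤ C₀ * t ^ γ / q s := by
        have h := hBb s hs'
        rw [← ht, ← hqs] at h
        exact h
      have hμs : 0 < μ s := hμpos s hspos
      have h1 : |μ s * B s| ≤ C₀ * t ^ γ := by
        rw [abs_mul, abs_of_pos hμs]
        calc μ s * |B s| ≤ μ s * (C₀ * t ^ γ / q s) := mul_le_mul_of_nonneg_left hBs hμs.le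
          _ = s^m * (C₀ * t ^ γ) := by
              simp only [hμ]; field_simp
          _ ≤ 1 * (C₀ * t ^ γ) := mul_le_mul_of_nonneg_right hsm (by positivity)
          _ = C₀ * t ^ γ := one_mul _
      have hμ'b : |μ' s| ≤ (m:ℝ) * q s + 2*t := by
        have hμ'v : μ' s = (m:ℝ) * s^(m-1) * q s + s^m * (2*t) := rfl
        have hmn0 : (0:ℝ) ≤ (m:ℝ) := Nat.cast_nonneg m
        rw [hμ'v, abs_of_nonneg (by positivity)]
        have hb1 : (m:ℝ) * s^(m-1) * q s ≤ (m:ℝ) * q s := by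
          have h1 : (m:ℝ) * s^(m-1) ≤ (m:ℝ) := mul_le_of_le_one_right hmn0 hsm'
          exact mul_le_mul_of_nonneg_right h1 hu0.le
        have hb2 : s^m * (2*t) ≤ 2*t := mul_le_of_le_one_left (by positivity) hsm
        linarith
      have h2 : |μ' s * A s| ≤ (2*(m:ℝ)+2)*C₀ * t ^ γ := by
        rw [abs_mul]
        have hmn0 : (0:ℝ) ≤ (m:ℝ) := Nat.cast_nonneg m
        have step1 : |μ' s| * |A s| ≤ ((m:ℝ) * q s + 2*t) * (C₀ * t ^ γ / σ) := by
          apply mul_le_mul hμ'b hAs (abs_nonneg _)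
          have : (0:ℝ) ≤ (m:ℝ) * q s := mul_nonneg hmn0 hu0.le
          linarith [ht0]
        have hkey : (m:ℝ) * q s + 2*t ≤ (2*(m:ℝ)+2)*σ := by
          have hms : (0:ℝ) ≤ (m:ℝ) * σ := mul_nonneg hmn0 hσ0.le
          have e1 : (m:ℝ) * q s = ((m:ℝ) * σ) * σ := by rw [← hσsq]; ring
          have h1 : ((m:ℝ) * σ) * σ ≤ ((m:ℝ) * σ) * 2 := mul_le_mul_of_nonneg_left hσ2 hms
          linarith [e1, h1, htσ]
        have step2 : ((m:ℝ) * q s + 2*t) * (C₀ * t ^ γ / σ) ≤ (2*(m:ℝ)+2)*C₀ * t ^ γ := by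
          rw [mul_div_assoc', div_le_iff₀ hσ0]
          calc ((m:ℝ) * q s + 2*t) * (C₀ * t ^ γ) ≤ ((2*(m:ℝ)+2)*σ) * (C₀ * t ^ γ) :=
                mul_le_mul_of_nonneg_right hkey (by positivity)
            _ = (2*(m:ℝ)+2)*C₀ * t ^ γ * σ := by ring
        exact step1.trans step2
      have hgs : |g s| ≤ |μ s * B s| + |μ' s * A s| := by
        simp only [hg, sub_eq_add_neg]
        exact (abs_add_le _ _).trans (by rw [abs_neg])
      have hmlnn : (2*(m:ℝ)+2) ≤ 2*(n:ℝ)+2 := by linarith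
      calc |g s| ≤ C₀ * t ^ γ + (2*(m:ℝ)+2)*C₀ * t ^ γ := hgs.trans (add_le_add h1 h2)
        _ = (2*(m:ℝ)+3) * (C₀ * t ^ γ) := by ring
        _ ≤ (2*(n:ℝ)+3) * (C₀ * t ^ γ) :=
            mul_le_mul_of_nonneg_right (by linarith) (by positivity)
        _ = (2*(n:ℝ)+3)*C₀ * t ^ γ := by ring
    have hIcalc : (∫ s in r₀..r, (2*(n:ℝ)+3)*C₀ * max (s - r₀) 0 ^ γ) =
        (2*(n:ℝ)+3)*C₀ * ((r-r₀) ^ (γ+1) / (γ+1)) := by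
      rw [intervalIntegral.integral_const_mul]
      congr 1
      have e1 : (∫ s in r₀..r, max (s - r₀) 0 ^ γ) = ∫ s in r₀..r, (s - r₀) ^ γ := by
        apply intervalIntegral.integral_congr
        intro s hs
        rw [uIcc_of_le hcase.le] at hs
        show max (s - r₀) 0 ^ γ = (s - r₀) ^ γ
        rw [max_eq_left (by linarith [hs.1])]
      rw [e1]
      rw [intervalIntegral.integral_comp_sub_right (fun u => u ^ γ) r₀]
      rw [sub_self]
      rw [integral_rpow (Or.inl (by linarith : (-1:ℝ) < γ))]
      rw [Real.zero_rpow (by linarith : γ + 1 ≠ 0)]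
      ring
    have hhc : ContinuousOn (fun s => (2*(n:ℝ)+3)*C₀ * max (s - r₀) 0 ^ γ) (Icc r₀ r) := by
      apply ContinuousOn.mul continuousOn_const
      apply ContinuousOn.rpow_const
      · exact ((continuous_id.sub continuous_const).max continuous_const).continuousOn
      · intro x _; exact Or.inr hγ0.le
    have hinth : IntervalIntegrable (fun s => (2*(n:ℝ)+3)*C₀ * max (s - r₀) 0 ^ γ)
        MeasureTheory.volume r₀ r := ContinuousOn.intervalIntegrable_of_Icc hcase.le hhc
    have habs : |∫ s in a..r, g s| ≤ (2*(n:ℝ)+3)*C₀ * ((r-r₀) ^ (γ+1) / (γ+1)) := by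
      rw [hsplit]
      calc |∫ s in r₀..r, g s| ≤ ∫ s in r₀..r, |g s| :=
            intervalIntegral.abs_integral_le_integral_abs hcase.le
        _ ≤ ∫ s in r₀..r, (2*(n:ℝ)+3)*C₀ * max (s - r₀) 0 ^ γ :=
            intervalIntegral.integral_mono_on hcase.le hint2.abs hinth hgb
        _ = _ := hIcalc
    have hAa : A a = 0 := hA0 a haIoo har₀
    have hWa : μ a * W a = μ (r₀/2) * W (r₀/2) := hconst a ⟨haIoo.1.le, har₀⟩
    have hq2' : q (r₀/2) = ε := by
      simp only [hq]; rw [max_eq_right (by linarith)]; ring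
    have hend : |μ a * (W a - A a)| ≤ ε * C₀ := by
      rw [hAa, sub_zero, hWa, abs_mul, abs_of_pos (hμpos _ (by linarith : (0:ℝ) < r₀/2))]
      have hμ2v : μ (r₀/2) = (r₀/2)^m * ε := by simp only [hμ, hq2']
      calc μ (r₀/2) * |W (r₀/2)| ≤ μ (r₀/2) * C₀ :=
            mul_le_mul_of_nonneg_left hV'0 (hμpos _ (by linarith : (0:ℝ) < r₀/2)).le
        _ = (r₀/2)^m * ε * C₀ := by rw [hμ2v]
        _ ≤ 1 * ε * C₀ := by
            have := mul_le_mul_of_nonneg_right (mul_le_mul_of_nonneg_right hP1 hε0.le) hC₀.le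
            linarith
        _ = ε * C₀ := by ring
    set w := q r with hw
    have hw0 : 0 < w := hq_pos r
    have hx0 : 0 ≤ r - r₀ := by linarith
    have hmaxr : max (r - r₀) 0 = r - r₀ := max_eq_left hx0
    have hwv : w = ε + (r - r₀)^2 := by simp only [hw, hq]; rw [hmaxr]
    have hx0' : 0 ≤ r - r₀ := by linarith
    have hxle1 : r - r₀ ≤ 1 := by linarith [hr.2]
    have hw2 : w ≤ 2 := by rw [hwv]; nlinarith [hx0', hxle1, hε1]
    have hx2w : (r - r₀)^2 ≤ w := by rw [hwv]; linarith
    set p := (γ+1)/2 with hp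
    have hp0 : 0 ≤ p := by rw [hp]; linarith
    have hxp : (r - r₀) ^ (γ+1) ≤ w ^ p := by
      have e : ((r - r₀)^2 : ℝ) ^ p = (r - r₀) ^ (γ+1) := by
        rw [← Real.rpow_natCast (r - r₀) 2, ← Real.rpow_mul hx0]
        congr 1
        rw [hp]; push_cast; ring
      rw [← e]
      exact Real.rpow_le_rpow (by positivity) hx2w hp0
    have hxγ : (r - r₀) ^ γ ≤ w ^ (γ/2) := by
      have e : ((r - r₀)^2 : ℝ) ^ (γ/2) = (r - r₀) ^ γ := by
        rw [← Real.rpow_natCast (r - r₀) 2, ← Real.rpow_mul hx0]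
        congr 1
        push_cast; ring
      rw [← e]
      exact Real.rpow_le_rpow (by positivity) hx2w (by linarith)
    have hww : w * w ^ ((γ-1)/2) = w ^ p := by
      nth_rewrite 1 [← Real.rpow_one w]
      rw [← Real.rpow_add hw0]
      congr 1
      rw [hp]; ring
    have hw1γ : w ^ ((1-γ)/2) ≤ 2 := rpow_le_two hw0 hw2 (by linarith) (by linarith)
    have hwp_pos : 0 < w ^ p := Real.rpow_pos_of_pos hw0 p
    have hεw : ε ≤ w := by rw [hwv]; nlinarith [sq_nonneg (r - r₀)]
    have hwle : w ≤ 2 * w ^ p := by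
      calc w = w ^ p * w ^ ((1-γ)/2) := by
            rw [← Real.rpow_add hw0, show p + (1-γ)/2 = 1 by rw [hp]; ring, Real.rpow_one]
        _ ≤ w ^ p * 2 := mul_le_mul_of_nonneg_left hw1γ hwp_pos.le
        _ = 2 * w ^ p := by ring
    have hAr : |A r| ≤ C₀ * w ^ ((γ-1)/2) := by
      have h := hAb r (⟨by linarith, hr.2⟩ : r ∈ Ioo (r₀/2) 1)
      rw [hmaxr, show (ε + (r - r₀)^2 : ℝ) = w from hwv.symm] at h
      have hpos12 : 0 < w ^ ((1:ℝ)/2) := Real.rpow_pos_of_pos hw0 _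
      calc |A r| ≤ C₀ * (r - r₀) ^ γ / w ^ ((1:ℝ)/2) := h
        _ ≤ C₀ * w ^ (γ/2) / w ^ ((1:ℝ)/2) :=
            (div_le_div_iff_of_pos_right hpos12).mpr (mul_le_mul_of_nonneg_left hxγ hC₀.le)
        _ = C₀ * w ^ ((γ-1)/2) := by
            rw [mul_div_assoc, ← Real.rpow_sub hw0]
            congr 2
            ring
    have hμr_lb : (r₀/2)^m * w ≤ μ r := by
      have : μ r = r^m * w := rfl
      rw [this]
      exact mul_le_mul_of_nonneg_right
        (pow_le_pow_left₀ (by linarith) hr.1 m) hw0.le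
    have hμrWA : |μ r * (W r - A r)| ≤ (2*C₀ + (2*(n:ℝ)+3)*C₀) * w ^ p := by
      have e : μ r * (W r - A r) = μ a * (W a - A a) + ∫ s in a..r, g s := by
        rw [hFTC]; ring
      rw [e]
      calc |μ a * (W a - A a) + ∫ s in a..r, g s|
          ≤ |μ a * (W a - A a)| + |∫ s in a..r, g s| := abs_add_le _ _
        _ ≤ ε * C₀ + (2*(n:ℝ)+3)*C₀ * ((r-r₀) ^ (γ+1) / (γ+1)) := add_le_add hend habs
        _ ≤ 2*C₀ * w ^ p + (2*(n:ℝ)+3)*C₀ * w ^ p := by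
            apply add_le_add
            · have := mul_le_mul_of_nonneg_right (hεw.trans hwle) hC₀.le
              linarith
            · have hd1 : (r-r₀) ^ (γ+1) / (γ+1) ≤ (r-r₀) ^ (γ+1) :=
                div_le_self (Real.rpow_nonneg hx0 _) (by linarith)
              have hd2 : (0:ℝ) ≤ (2*(n:ℝ)+3)*C₀ := by positivity
              exact mul_le_mul_of_nonneg_left (hd1.trans hxp) hd2
        _ = (2*C₀ + (2*(n:ℝ)+3)*C₀) * w ^ p := by ring
    have hPw : 0 < (r₀/2)^m * w := mul_pos hP hw0
    have hfin : ((r₀/2)^m * w) * |W r| ≤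
        ((r₀/2)^m * w) * ((C₀ + (2*(n:ℝ)+5)*C₀/((r₀/2)^m)) * w ^ ((γ-1)/2)) := by
      have hWsplit : |W r| ≤ |W r - A r| + |A r| := by
        have e : (W r - A r) + A r = W r := by ring
        calc |W r| = |(W r - A r) + A r| := by rw [e]
          _ ≤ |W r - A r| + |A r| := abs_add_le _ _
      have hT1 : ((r₀/2)^m * w) * |W r - A r| ≤ (2*C₀ + (2*(n:ℝ)+3)*C₀) * w ^ p := by
        calc ((r₀/2)^m * w) * |W r - A r| ≤ μ r * |W r - A r| :=
              mul_le_mul_of_nonneg_right hμr_lb (abs_nonneg _)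
          _ = |μ r * (W r - A r)| := by
              rw [abs_mul, abs_of_pos (hμpos r (by linarith : (0:ℝ) < r))]
          _ ≤ _ := hμrWA
      have hT2 : ((r₀/2)^m * w) * |A r| ≤ (r₀/2)^m * C₀ * w ^ p := by
        calc ((r₀/2)^m * w) * |A r| ≤ ((r₀/2)^m * w) * (C₀ * w ^ ((γ-1)/2)) :=
              mul_le_mul_of_nonneg_left hAr hPw.le
          _ = (r₀/2)^m * C₀ * (w * w ^ ((γ-1)/2)) := by ring
          _ = (r₀/2)^m * C₀ * w ^ p := by rw [hww]
      have hPX : (r₀/2)^m * ((2*(n:ℝ)+5)*C₀/((r₀/2)^m)) = (2*(n:ℝ)+5)*C₀ := by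
        field_simp
      have hRHS : ((r₀/2)^m * w) * ((C₀ + (2*(n:ℝ)+5)*C₀/((r₀/2)^m)) * w ^ ((γ-1)/2))
          = ((r₀/2)^m * C₀ + (2*(n:ℝ)+5)*C₀) * w ^ p := by
        calc ((r₀/2)^m * w) * ((C₀ + (2*(n:ℝ)+5)*C₀/((r₀/2)^m)) * w ^ ((γ-1)/2))
            = ((r₀/2)^m * C₀ + (r₀/2)^m * ((2*(n:ℝ)+5)*C₀/((r₀/2)^m))) *
              (w * w ^ ((γ-1)/2)) := by ring
          _ = ((r₀/2)^m * C₀ + (2*(n:ℝ)+5)*C₀) * w ^ p := by rw [hPX, hww]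
      calc ((r₀/2)^m * w) * |W r|
          ≤ ((r₀/2)^m * w) * (|W r - A r| + |A r|) :=
            mul_le_mul_of_nonneg_left hWsplit hPw.le
        _ = ((r₀/2)^m * w) * |W r - A r| + ((r₀/2)^m * w) * |A r| := by ring
        _ ≤ (2*C₀ + (2*(n:ℝ)+3)*C₀) * w ^ p + (r₀/2)^m * C₀ * w ^ p := add_le_add hT1 hT2
        _ = ((r₀/2)^m * C₀ + (2*(n:ℝ)+5)*C₀) * w ^ p := by ring
        _ = _ := hRHS.symm
    exact le_of_mul_le_mul_left hfin hPw
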